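/- Let λ₁, λ₂ > 0 and let f : ℝ^m × ℝ^n → ℝ be measurable with |f(x,y)| ≤ 1 for all (x,y). Let p̄ on ℝ^m and q̄ on ℝ^n be probability densities with finite second moments and finite entropy. Define the Gibbs best responses p̄*(x) ∝ exp(−λ₂^{−1}[∫ f(x,y) q̄(y) dy + λ₁‖x‖²]) and q̄*(y) ∝ exp(λ₂^{−1}[∫ f(x,y) p̄(x) dx − λ₁‖y‖²]). Then L(p̄, q̄*) − L(p̄*, q̄) ≥ λ₂ (KL(p̄‖p̄*) + KL(q̄‖q̄*)), where L(p,q) = ∬ f(x,y) p(x) q(y) dx dy + R(p) − R(q) and R(ρ) = ∫ (λ₁‖θ‖² + λ₂ log ρ(θ)) ρ(θ) dθ. In other words, the max-min (duality) gap at (p̄, q̄) controls the KL distance to its Gibbs best responses. -/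

import Mathlib

open MeasureTheory Real

noncomputable section

abbrev E (d : ℕ) := EuclideanSpace ℝ (Fin d)

def IsDensity {d : ℕ} (p : E d → ℝ) : Prop :=
  Measurable p ∧ (∀ θ, 0 ≤ p θ) ∧ ∫ θ, p θ = 1

def Admissible {d : ℕ} (p : E d → ℝ) : Prop :=
  IsDensity p ∧ Integrable (fun θ => ‖θ‖ ^ 2 * p θ) ∧
    Integrable (fun θ => p θ * Real.log (p θ))

def KLdiv {d : ℕ} (p q : E d → ℝ) : ℝ := ∫ θ, p θ * Real.log (p θ / q θ)

def Reg {d : ℕ} (lam1 lam2 : ℝ) (p : E d → ℝ) : ℝ :=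
  ∫ θ, (lam1 * ‖θ‖ ^ 2 + lam2 * Real.log (p θ)) * p θ

lemma integrable_gauss {d : ℕ} {b : ℝ} (hb : 0 < b) :
    Integrable (fun x : E d => Real.exp (-b * ‖x‖ ^ 2)) := by
  have h := (GaussianFourier.integrable_cexp_neg_mul_sq_norm_add (V := E d) (b := (b : ℂ))
    (by simpa using hb) 0 0).norm
  apply h.congr
  filter_upwards with x
  rw [Complex.norm_exp]
  congr 1
  simp
  left
  rw [← Complex.ofReal_pow, Complex.ofReal_re]

lemma integrable_sq_gauss {d : ℕ} {b : ℝ} (hb : 0 < b) :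
    Integrable (fun x : E d => ‖x‖ ^ 2 * Real.exp (-b * ‖x‖ ^ 2)) := by
  have h2 : (0:ℝ) < b / 2 := by linarith
  refine Integrable.mono' ((integrable_gauss (d := d) h2).const_mul (2 / b))
    (((measurable_norm.pow_const 2).mul
      (((measurable_norm.pow_const 2).const_mul (-b)).exp)).aestronglyMeasurable) ?_
  filter_upwards with x
  rw [Real.norm_eq_abs, abs_of_nonneg (by positivity)]
  set t := ‖x‖ ^ 2 with ht
  have ht0 : 0 ≤ t := by positivity
  have e1 : Real.exp (-(b/2) * t) * Real.exp (-(b/2) * t) = Real.exp (-b * t) := by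
    rw [← Real.exp_add]; ring_nf
  have e2 : (b/2) * t + 1 ≤ Real.exp ((b/2) * t) := Real.add_one_le_exp _
  have e3 : Real.exp (-(b/2) * t) * Real.exp ((b/2) * t) = 1 := by
    rw [← Real.exp_add]; ring_nf; exact Real.exp_zero
  have p1 := Real.exp_pos (-(b/2) * t)
  have p2 := Real.exp_pos ((b/2) * t)
  have h4 : t ≤ 2 / b * Real.exp ((b/2) * t) := by
    have h := mul_le_mul_of_nonneg_left e2 (show (0:ℝ) ≤ 2 / b by positivity)
    have heq : 2 / b * (b / 2 * t + 1) = t + 2 / b := by field_simp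
    have hb2 : (0:ℝ) < 2 / b := by positivity
    linarith
  have h5 : t * (Real.exp (-(b/2)*t) * Real.exp (-(b/2)*t)) ≤ 2 / b * Real.exp (-(b/2)*t) := by
    calc t * (Real.exp (-(b/2)*t) * Real.exp (-(b/2)*t))
        ≤ (2 / b * Real.exp ((b/2)*t)) * (Real.exp (-(b/2)*t) * Real.exp (-(b/2)*t)) := by
          apply mul_le_mul_of_nonneg_right h4 (by positivity)
      _ = 2 / b * Real.exp (-(b/2)*t) * (Real.exp (-(b/2)*t) * Real.exp ((b/2)*t)) := by ring
      _ = 2 / b * Real.exp (-(b/2)*t) := by rw [e3]; ring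
  calc t * Real.exp (-b * t) = t * (Real.exp (-(b/2)*t) * Real.exp (-(b/2)*t)) := by rw [e1]
    _ ≤ 2 / b * Real.exp (-(b/2)*t) := h5

lemma IsDensity.integrable {d : ℕ} {p : E d → ℝ} (hp : IsDensity p) : Integrable p := by
  by_contra h
  have := hp.2.2
  rw [integral_undef h] at this
  norm_num at this

lemma gibbs_gap {d : ℕ} (lam1 lam2 : ℝ) (hlam1 : 0 < lam1) (hlam2 : 0 < lam2)
    (g : E d → ℝ) (hg_meas : Measurable g) (hg_bdd : ∀ x, |g x| ≤ 1)
    (p ps : E d → ℝ) (hp : Admissible p)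
    (hps : ∀ x, ps x = Real.exp (-lam2⁻¹ * (g x + lam1 * ‖x‖ ^ 2))
        / ∫ x', Real.exp (-lam2⁻¹ * (g x' + lam1 * ‖x'‖ ^ 2))) :
    Admissible ps ∧
      ((∫ x, g x * p x) + Reg lam1 lam2 p) - ((∫ x, g x * ps x) + Reg lam1 lam2 ps)
        = lam2 * KLdiv p ps := by
  have hb : 0 < lam2⁻¹ * lam1 := by positivity
  set φ : E d → ℝ := fun x => Real.exp (-lam2⁻¹ * (g x + lam1 * ‖x‖ ^ 2)) with hφdef
  set Z : ℝ := ∫ x', φ x' with hZdef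
  have hφmeas : Measurable φ :=
    (((hg_meas.add ((measurable_norm.pow_const 2).const_mul lam1)).const_mul (-lam2⁻¹))).exp
  have hφle : ∀ x, φ x ≤ Real.exp lam2⁻¹ * Real.exp (-(lam2⁻¹ * lam1) * ‖x‖ ^ 2) := by
    intro x
    rw [← Real.exp_add]
    apply Real.exp_le_exp.mpr
    have := abs_le.mp (hg_bdd x)
    have hl2 : 0 < lam2⁻¹ := by positivity
    nlinarith [this.1, this.2]
  have hφint : Integrable φ := by
    refine Integrable.mono' ((integrable_gauss (d := d) hb).const_mul (Real.exp lam2⁻¹))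
      hφmeas.aestronglyMeasurable ?_
    filter_upwards with x
    rw [Real.norm_eq_abs, abs_of_nonneg (Real.exp_nonneg _)]
    exact hφle x
  have hZpos : 0 < Z := by
    rw [hZdef, integral_pos_iff_support_of_nonneg (fun x => Real.exp_nonneg _) hφint]
    have : Function.support φ = Set.univ :=
      Set.eq_univ_of_forall fun x => Function.mem_support.mpr (Real.exp_ne_zero _)
    rw [this]
    exact isOpen_univ.measure_pos volume ⟨0, trivial⟩
  have hpspos : ∀ x, 0 < ps x := fun x => by
    rw [hps x]; exact div_pos (Real.exp_pos _) hZpos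
  have hps_meas : Measurable ps := by
    have : ps = fun x => φ x / Z := funext hps
    rw [this]; exact hφmeas.div_const Z
  have hps_int : Integrable ps := by
    have : ps = fun x => φ x / Z := funext hps
    rw [this]; exact hφint.div_const Z
  have hps_one : ∫ x, ps x = 1 := by
    have : ps = fun x => φ x / Z := funext hps
    rw [this, integral_div, ← hZdef, div_self hZpos.ne']
  have hlogps : ∀ x, Real.log (ps x)
      = -lam2⁻¹ * (g x + lam1 * ‖x‖ ^ 2) - Real.log Z := by
    intro x
    rw [hps x, Real.log_div (Real.exp_ne_zero _) hZpos.ne', Real.log_exp]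
  -- integrability facts
  have hgp : Integrable (fun x => g x * p x) := by
    refine Integrable.mono' hp.1.integrable
      (hg_meas.mul hp.1.1).aestronglyMeasurable ?_
    filter_upwards with x
    rw [Real.norm_eq_abs, abs_mul, abs_of_nonneg (hp.1.2.1 x)]
    nlinarith [hg_bdd x, hp.1.2.1 x, abs_nonneg (g x)]
  have hgps : Integrable (fun x => g x * ps x) := by
    refine Integrable.mono' hps_int (hg_meas.mul hps_meas).aestronglyMeasurable ?_
    filter_upwards with x
    rw [Real.norm_eq_abs, abs_mul, abs_of_nonneg (hpspos x).le]
    nlinarith [hg_bdd x, (hpspos x).le, abs_nonneg (g x)]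
  have hnps : Integrable (fun x => ‖x‖ ^ 2 * ps x) := by
    refine Integrable.mono' (((integrable_sq_gauss (d := d) hb)).const_mul
      (Real.exp lam2⁻¹ / Z)) ((measurable_norm.pow_const 2).mul hps_meas).aestronglyMeasurable ?_
    filter_upwards with x
    rw [Real.norm_eq_abs, abs_of_nonneg (mul_nonneg (by positivity) (hpspos x).le)]
    rw [hps x]
    have h1 : ‖x‖ ^ 2 * (φ x / Z) = ‖x‖ ^ 2 * φ x / Z := by ring
    have h2 : Real.exp lam2⁻¹ / Z * (‖x‖ ^ 2 * Real.exp (-(lam2⁻¹ * lam1) * ‖x‖ ^ 2))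
        = Real.exp lam2⁻¹ * (‖x‖ ^ 2 * Real.exp (-(lam2⁻¹ * lam1) * ‖x‖ ^ 2)) / Z := by ring
    rw [h1, h2]
    apply (div_le_div_iff_of_pos_right hZpos).mpr
    nlinarith [hφle x, sq_nonneg ‖x‖, Real.exp_nonneg (-(lam2⁻¹ * lam1) * ‖x‖ ^ 2)]
  have hpslog : Integrable (fun x => ps x * Real.log (ps x)) := by
    refine Integrable.congr (((hgps.const_mul (-lam2⁻¹)).add
      (hnps.const_mul (-(lam2⁻¹ * lam1)))).add (hps_int.const_mul (-Real.log Z))) ?_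
    filter_upwards with x
    simp only [Pi.add_apply]
    rw [hlogps x]; ring
  have hpsAdm : Admissible ps := ⟨⟨hps_meas, fun x => (hpspos x).le, hps_one⟩, hnps, hpslog⟩
  -- the energy identity
  have key : ∀ ρ : E d → ℝ, Admissible ρ → Integrable (fun x => g x * ρ x) →
      ((∫ x, g x * ρ x) + Reg lam1 lam2 ρ) = lam2 * KLdiv ρ ps - lam2 * Real.log Z := by
    intro ρ hρ hgρ
    have hρ0 := hρ.1.2.1
    have hRegρ : Reg lam1 lam2 ρ
        = lam1 * (∫ x, ‖x‖ ^ 2 * ρ x) + lam2 * (∫ x, ρ x * Real.log (ρ x)) := by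
      unfold Reg
      rw [show (fun θ => (lam1 * ‖θ‖ ^ 2 + lam2 * Real.log (ρ θ)) * ρ θ)
          = fun θ => lam1 * (‖θ‖ ^ 2 * ρ θ) + lam2 * (ρ θ * Real.log (ρ θ)) from
            funext fun θ => by ring]
      rw [integral_add (hρ.2.1.const_mul lam1) (hρ.2.2.const_mul lam2),
        integral_const_mul, integral_const_mul]
    have hKL : KLdiv ρ ps = ∫ x, (ρ x * Real.log (ρ x) + lam2⁻¹ * (g x * ρ x)
        + (lam2⁻¹ * lam1) * (‖x‖ ^ 2 * ρ x) + Real.log Z * ρ x) := by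
      unfold KLdiv
      apply integral_congr_ae
      filter_upwards with x
      by_cases hx : ρ x = 0
      · simp [hx]
      · have hxpos : 0 < ρ x := lt_of_le_of_ne (hρ0 x) (Ne.symm hx)
        rw [Real.log_div hx (hpspos x).ne', hlogps x]
        ring
    have iB : Integrable (fun x => lam2⁻¹ * (g x * ρ x)) := hgρ.const_mul lam2⁻¹
    have iC : Integrable (fun x => (lam2⁻¹ * lam1) * (‖x‖ ^ 2 * ρ x)) :=
      hρ.2.1.const_mul (lam2⁻¹ * lam1)
    have iD : Integrable (fun x : E d => Real.log Z * ρ x) :=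
      hρ.1.integrable.const_mul (Real.log Z)
    have iAB : Integrable (fun x => ρ x * Real.log (ρ x) + lam2⁻¹ * (g x * ρ x)) :=
      hρ.2.2.add iB
    have iABC : Integrable (fun x => ρ x * Real.log (ρ x) + lam2⁻¹ * (g x * ρ x)
        + (lam2⁻¹ * lam1) * (‖x‖ ^ 2 * ρ x)) := iAB.add iC
    rw [hKL, integral_add iABC iD, integral_add iAB iC, integral_add hρ.2.2 iB,
      integral_const_mul, integral_const_mul, integral_const_mul, hρ.1.2.2, hRegρ]
    field_simp
    ring
  have hKLps : KLdiv ps ps = 0 := by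
    unfold KLdiv
    rw [show (fun θ => ps θ * Real.log (ps θ / ps θ)) = fun _ => (0:ℝ) from
      funext fun θ => by rw [div_self (hpspos θ).ne', Real.log_one, mul_zero]]
    exact integral_zero _ _
  refine ⟨hpsAdm, ?_⟩
  rw [key p hp hgp, key ps hpsAdm hgps, hKLps]
  ring


lemma double_swap {m n : ℕ} (f : E m → E n → ℝ)
    (hf_meas : Measurable (fun z : E m × E n => f z.1 z.2)) (hf_bdd : ∀ x y, |f x y| ≤ 1)
    (p : E m → ℝ) (q : E n → ℝ) (hp : IsDensity p) (hq : IsDensity q) :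
    ∫ x, ∫ y, f x y * p x * q y = ∫ y, ∫ x, f x y * p x * q y := by
  apply integral_integral_swap
  have hmeas : AEStronglyMeasurable (fun z : E m × E n => f z.1 z.2 * p z.1 * q z.2)
      (volume.prod volume) :=
    ((hf_meas.mul (hp.1.comp measurable_fst)).mul (hq.1.comp measurable_snd)).aestronglyMeasurable
  have hbnd : Integrable (fun z : E m × E n => p z.1 * q z.2) (volume.prod volume) :=
    hp.integrable.mul_prod hq.integrable
  refine Integrable.mono' hbnd hmeas ?_
  filter_upwards with z
  simp only [Function.uncurry_def]
  rw [Real.norm_eq_abs, abs_mul, abs_mul, abs_of_nonneg (hp.2.1 _), abs_of_nonneg (hq.2.1 _)]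
  nlinarith [hf_bdd z.1 z.2, hp.2.1 z.1, hq.2.1 z.2, abs_nonneg (f z.1 z.2),
    mul_nonneg (hp.2.1 z.1) (hq.2.1 z.2)]

lemma double_left {m n : ℕ} (f : E m → E n → ℝ) (p : E m → ℝ) (q : E n → ℝ) :
    ∫ x, ∫ y, f x y * p x * q y = ∫ x, (∫ y, f x y * q y) * p x := by
  apply integral_congr_ae
  filter_upwards with x
  rw [show (fun y => f x y * p x * q y) = fun y => (f x y * q y) * p x from
    funext fun y => by ring, integral_mul_const]

def Lfun {m n : ℕ} (lam1 lam2 : ℝ) (f : E m → E n → ℝ) (p : E m → ℝ) (q : E n → ℝ) : ℝ :=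
  (∫ x, ∫ y, f x y * p x * q y) + Reg lam1 lam2 p - Reg lam1 lam2 q

/-- The max-min (duality) gap at `(p̄, q̄)` controls the KL distance to the
Gibbs best responses: `L(p̄, q̄*) − L(p̄*, q̄) ≥ λ₂(KL(p̄‖p̄*) + KL(q̄‖q̄*))`. -/
theorem duality_gap_controls_KL (m n : ℕ) (lam1 lam2 : ℝ)
    (hlam1 : 0 < lam1) (hlam2 : 0 < lam2)
    (f : E m → E n → ℝ)
    (hf_meas : Measurable (fun z : E m × E n => f z.1 z.2))
    (hf_bdd : ∀ x y, |f x y| ≤ 1)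
    (pbar : E m → ℝ) (qbar : E n → ℝ)
    (hpbar : Admissible pbar) (hqbar : Admissible qbar)
    (pbarStar : E m → ℝ) (qbarStar : E n → ℝ)
    (hpbarStar : ∀ x, pbarStar x
      = Real.exp (-lam2⁻¹ * ((∫ y, f x y * qbar y) + lam1 * ‖x‖ ^ 2))
        / ∫ x', Real.exp (-lam2⁻¹ * ((∫ y, f x' y * qbar y) + lam1 * ‖x'‖ ^ 2)))
    (hqbarStar : ∀ y, qbarStar y
      = Real.exp (lam2⁻¹ * ((∫ x, f x y * pbar x) - lam1 * ‖y‖ ^ 2))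
        / ∫ y', Real.exp (lam2⁻¹ * ((∫ x, f x y' * pbar x) - lam1 * ‖y'‖ ^ 2))) :
    lam2 * (KLdiv pbar pbarStar + KLdiv qbar qbarStar)
      ≤ Lfun lam1 lam2 f pbar qbarStar - Lfun lam1 lam2 f pbarStar qbar := by
  -- the two Gibbs potentials
  set h : E m → ℝ := fun x => ∫ y, f x y * qbar y with hh
  set K : E n → ℝ := fun y => ∫ x, f x y * pbar x with hK
  have hh_meas : Measurable h := by
    have : StronglyMeasurable (fun z : E m × E n => f z.1 z.2 * qbar z.2) :=
      (hf_meas.mul (hqbar.1.1.comp measurable_snd)).stronglyMeasurable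
    exact this.integral_prod_right'.measurable
  have hK_meas : Measurable K := by
    have : StronglyMeasurable (fun z : E m × E n => f z.1 z.2 * pbar z.1) :=
      (hf_meas.mul (hpbar.1.1.comp measurable_fst)).stronglyMeasurable
    exact this.integral_prod_left'.measurable
  have bdd_aux : ∀ {d : ℕ} (ρ : E d → ℝ) (hρ : IsDensity ρ) (u : E d → ℝ)
      (hu_meas : Measurable u) (hu_bdd : ∀ t, |u t| ≤ 1), |∫ t, u t * ρ t| ≤ 1 := by
    intro d ρ hρ u hu_meas hu_bdd
    have hint : Integrable (fun t => u t * ρ t) := by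
      refine Integrable.mono' hρ.integrable (hu_meas.mul hρ.1).aestronglyMeasurable ?_
      filter_upwards with t
      rw [Real.norm_eq_abs, abs_mul, abs_of_nonneg (hρ.2.1 t)]
      nlinarith [hu_bdd t, hρ.2.1 t, abs_nonneg (u t)]
    calc |∫ t, u t * ρ t| ≤ ∫ t, |u t * ρ t| := by
          simpa only [Real.norm_eq_abs] using
            norm_integral_le_integral_norm (μ := (volume : Measure (E d)))
              (fun t => u t * ρ t)
      _ ≤ ∫ t, ρ t := by
          apply integral_mono hint.abs hρ.integrable
          intro t
          show |u t * ρ t| ≤ ρ t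
          rw [abs_mul, abs_of_nonneg (hρ.2.1 t)]
          nlinarith [hu_bdd t, hρ.2.1 t, abs_nonneg (u t)]
      _ = 1 := hρ.2.2
  have hh_bdd : ∀ x, |h x| ≤ 1 := fun x =>
    bdd_aux qbar hqbar.1 (fun y => f x y) (hf_meas.comp measurable_prodMk_left)
      (fun y => hf_bdd x y)
  have hK_bdd : ∀ y, |K y| ≤ 1 := fun y =>
    bdd_aux pbar hpbar.1 (fun x => f x y) (hf_meas.comp measurable_prodMk_right)
      (fun x => hf_bdd x y)
  -- Gibbs identities
  obtain ⟨hpsAdm, hP⟩ := gibbs_gap lam1 lam2 hlam1 hlam2 h hh_meas hh_bdd pbar pbarStar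
    hpbar hpbarStar
  have hgq_meas : Measurable (fun y => -K y) := hK_meas.neg
  have hgq_bdd : ∀ y, |(-K y)| ≤ 1 := fun y => by rw [abs_neg]; exact hK_bdd y
  have hqs' : ∀ y, qbarStar y = Real.exp (-lam2⁻¹ * (-K y + lam1 * ‖y‖ ^ 2))
      / ∫ y', Real.exp (-lam2⁻¹ * (-K y' + lam1 * ‖y'‖ ^ 2)) := by
    have heq : ∀ y : E n, Real.exp (lam2⁻¹ * (K y - lam1 * ‖y‖ ^ 2))
        = Real.exp (-lam2⁻¹ * (-K y + lam1 * ‖y‖ ^ 2)) := fun y => by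
      rw [show lam2⁻¹ * (K y - lam1 * ‖y‖ ^ 2) = -lam2⁻¹ * (-K y + lam1 * ‖y‖ ^ 2) by ring]
    intro y
    rw [hqbarStar y, heq y]
    congr 1
    exact integral_congr_ae (Filter.Eventually.of_forall fun y' => heq y')
  obtain ⟨hqsAdm, hQ⟩ := gibbs_gap lam1 lam2 hlam1 hlam2 (fun y => -K y) hgq_meas hgq_bdd
    qbar qbarStar hqbar hqs'
  -- rewrite the double integrals
  have T2 : ∫ x, ∫ y, f x y * pbarStar x * qbar y = ∫ x, h x * pbarStar x :=
    double_left f pbarStar qbar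
  have Ceq : ∫ x, h x * pbar x = ∫ y, K y * qbar y := by
    rw [← double_left f pbar qbar,
      double_swap f hf_meas hf_bdd pbar qbar hpbar.1 hqbar.1]
    apply integral_congr_ae
    filter_upwards with y
    rw [show (fun x => f x y * pbar x * qbar y) = fun x => (f x y * pbar x) * qbar y from rfl,
      integral_mul_const]
  have T1 : ∫ x, ∫ y, f x y * pbar x * qbarStar y = ∫ y, K y * qbarStar y := by
    rw [double_swap f hf_meas hf_bdd pbar qbarStar hpbar.1 hqsAdm.1]
    apply integral_congr_ae
    filter_upwards with y
    rw [show (fun x => f x y * pbar x * qbarStar y) = fun x => (f x y * pbar x) * qbarStar y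
      from rfl, integral_mul_const]
  have negint : ∀ (q : E n → ℝ), (∫ y, -K y * q y) = -∫ y, K y * q y := by
    intro q
    rw [show (fun y => -K y * q y) = fun y => -(K y * q y) from funext fun y => by ring,
      integral_neg]
  rw [negint qbar, negint qbarStar] at hQ
  apply le_of_eq
  unfold Lfun
  rw [T1, T2]
  linarith [hP, hQ, Ceq]
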